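/- Let Δ be a pure 2-dimensional connected simplicial complex on n vertices and let v_1, …, v_{n−3} be a sequence of distinct vertices. Define Δ_0 = Δ and Δ_i = del_{Δ_{i−1}}(v_i). Then Δ is vertex decomposable via this sequence if and only if: (1) for each i, link_{Δ_{i−1}}(v_i) is a connected 1-dimensional simplicial complex, and (2) Δ_{n−3} is the full simplex on the remaining 3 vertices. -/

import Mathlib

/-- An abstract simplicial complex on vertex type `V` (faces closed under subsets). -/
structure SC (V : Type) where
  faces : Set (Finset V)
  down_closed : ∀ ⦃s t : Finset V⦄, s ∈ faces → t ⊆ s → t ∈ faces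

variable {V : Type} [DecidableEq V]

/-- The deletion of a vertex. -/
def SC.del (Δ : SC V) (x : V) : SC V where
  faces := {F | x ∉ F ∧ F ∈ Δ.faces}
  down_closed := fun s t hs hts =>
    ⟨fun h => hs.1 (hts h), Δ.down_closed hs.2 hts⟩

/-- The link of a vertex. -/
def SC.link (Δ : SC V) (x : V) : SC V where
  faces := {F | x ∉ F ∧ insert x F ∈ Δ.faces}
  down_closed := fun s t hs hts =>
    ⟨fun h => hs.1 (hts h), Δ.down_closed hs.2 (Finset.insert_subset_insert x hts)⟩

/-- A facet: a maximal face. -/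
def SC.facet (Δ : SC V) (F : Finset V) : Prop :=
  F ∈ Δ.faces ∧ ∀ G ∈ Δ.faces, F ⊆ G → F = G

/-- The 1-skeleton graph of a simplicial complex, on its vertex set. -/
def SC.skeleton (Δ : SC V) : SimpleGraph {v : V // ({v} : Finset V) ∈ Δ.faces} :=
  SimpleGraph.fromRel (fun u v => ({u.1, v.1} : Finset V) ∈ Δ.faces)

/-- Connectivity of a simplicial complex (connectivity of its 1-skeleton). -/
def SC.Conn (Δ : SC V) : Prop := Δ.skeleton.Connected

/-- Vertex decomposability. -/
inductive VD : SC V → Prop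
  | point (Δ : SC V) : Δ.faces = {∅} → VD Δ
  | simplex (Δ : SC V) (F : Finset V) : Δ.faces = {s : Finset V | s ⊆ F} → VD Δ
  | shed (Δ : SC V) (x : V) : ({x} : Finset V) ∈ Δ.faces →
      VD (Δ.link x) → VD (Δ.del x) →
      (∀ F : Finset V, (Δ.del x).facet F → Δ.facet F) → VD Δ

/-- Vertex decomposability via a prescribed sequence of shedding vertices. -/
inductive VDvia : SC V → List V → Prop
  | point (Δ : SC V) : Δ.faces = {∅} → VDvia Δ []
  | simplex (Δ : SC V) (F : Finset V) : Δ.faces = {s : Finset V | s ⊆ F} → VDvia Δ []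
  | shed (Δ : SC V) (x : V) (xs : List V) : ({x} : Finset V) ∈ Δ.faces →
      VD (Δ.link x) → VDvia (Δ.del x) xs →
      (∀ F : Finset V, (Δ.del x).facet F → Δ.facet F) → VDvia Δ (x :: xs)

/-- Iterated deletion along a list of vertices. -/
def delSeq (Δ : SC V) : List V → SC V
  | [] => Δ
  | x :: xs => delSeq (Δ.del x) xs

section Aux

open Finset

variable {W : Type} [Fintype W] [DecidableEq W]

/-- vertex finset -/
noncomputable def vfin (Δ : SC W) : Finset W :=
  letI := Classical.decPred fun v => ({v} : Finset W) ∈ Δ.faces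
  Finset.univ.filter fun v => ({v} : Finset W) ∈ Δ.faces

lemma mem_vfin {Δ : SC W} {v : W} : v ∈ vfin Δ ↔ ({v} : Finset W) ∈ Δ.faces := by
  classical
  simp [vfin]

lemma exists_facet (Δ : SC W) {F : Finset W} (hF : F ∈ Δ.faces) :
    ∃ G, Δ.facet G ∧ F ⊆ G := by
  classical
  let T : Finset (Finset W) :=
    letI := Classical.decPred fun G => F ⊆ G ∧ G ∈ Δ.faces
    Finset.univ.filter fun G => F ⊆ G ∧ G ∈ Δ.faces
  have hmem : ∀ G, G ∈ T ↔ F ⊆ G ∧ G ∈ Δ.faces := by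
    intro G;
    letI := Classical.decPred fun G => F ⊆ G ∧ G ∈ Δ.faces
    simp [T]
  have hne : T.Nonempty := ⟨F, (hmem F).2 ⟨subset_rfl, hF⟩⟩
  obtain ⟨G, hG, hmax⟩ := T.exists_max_image (fun G => G.card) hne
  rw [hmem] at hG
  refine ⟨G, ⟨hG.2, ?_⟩, hG.1⟩
  intro H hH hGH
  have : H ∈ T := (hmem H).2 ⟨hG.1.trans hGH, hH⟩
  exact Finset.eq_of_subset_of_card_le hGH (hmax H this)

/-- edge relation -/
def ER (Δ : SC W) (u v : W) : Prop := u ≠ v ∧ ({u, v} : Finset W) ∈ Δ.faces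

def Reach (Δ : SC W) : W → W → Prop := Relation.ReflTransGen (ER Δ)

lemma ER.symm' {Δ : SC W} {u v : W} (h : ER Δ u v) : ER Δ v u :=
  ⟨h.1.symm, by rw [Finset.pair_comm]; exact h.2⟩

lemma Reach.symm' {Δ : SC W} {u v : W} (h : Reach Δ u v) : Reach Δ v u :=
  (@Relation.ReflTransGen.symmetric _ _ ⟨fun _ _ h => ER.symm' h⟩).symm _ _ h

lemma ER.vtx_left {Δ : SC W} {u v : W} (h : ER Δ u v) : ({u} : Finset W) ∈ Δ.faces :=
  Δ.down_closed h.2 (by simp)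

lemma ER.vtx_right {Δ : SC W} {u v : W} (h : ER Δ u v) : ({v} : Finset W) ∈ Δ.faces :=
  Δ.down_closed h.2 (by simp)

lemma skel_adj {Δ : SC W} {a b : {v : W // ({v} : Finset W) ∈ Δ.faces}} :
    Δ.skeleton.Adj a b ↔ a.1 ≠ b.1 ∧ ({a.1, b.1} : Finset W) ∈ Δ.faces := by
  constructor
  · rintro ⟨hne, h | h⟩
    · exact ⟨fun e => hne (Subtype.ext e), h⟩
    · exact ⟨fun e => hne (Subtype.ext e), by rwa [Finset.pair_comm]⟩
  · rintro ⟨hne, h⟩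
    exact ⟨fun e => hne (congrArg Subtype.val e), Or.inl h⟩

lemma reach_of_reachable {Δ : SC W} {a b : {v : W // ({v} : Finset W) ∈ Δ.faces}}
    (h : Δ.skeleton.Reachable a b) : Reach Δ a.1 b.1 := by
  rw [SimpleGraph.reachable_iff_reflTransGen] at h
  exact Relation.ReflTransGen.lift (p := ER Δ) Subtype.val (fun x y hxy => (skel_adj.1 hxy : _)) _ _ h

lemma reachable_of_reach {Δ : SC W} {a b : W} (h : Reach Δ a b) :
    ∀ (ha : ({a} : Finset W) ∈ Δ.faces) (hb : ({b} : Finset W) ∈ Δ.faces),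
    Δ.skeleton.Reachable ⟨a, ha⟩ ⟨b, hb⟩ := by
  induction h with
  | refl => exact fun _ _ => SimpleGraph.Reachable.refl _
  | tail hab hbc ih =>
    intro ha hc
    exact (ih ha hbc.vtx_left).trans (SimpleGraph.Adj.reachable (skel_adj.2 ⟨hbc.1, hbc.2⟩))

lemma conn_iff {Δ : SC W} :
    Δ.Conn ↔ (∃ v, ({v} : Finset W) ∈ Δ.faces) ∧
      ∀ u v, ({u} : Finset W) ∈ Δ.faces → ({v} : Finset W) ∈ Δ.faces → Reach Δ u v := by
  constructor
  · intro h
    obtain ⟨⟨v, hv⟩⟩ := h.nonempty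
    exact ⟨⟨v, hv⟩, fun u w hu hw => reach_of_reachable (h.preconnected ⟨u, hu⟩ ⟨w, hw⟩)⟩
  · rintro ⟨⟨v, hv⟩, hr⟩
    rw [SC.Conn, SimpleGraph.connected_iff]
    exact ⟨fun a b => reachable_of_reach (hr a.1 b.1 a.2 b.2) a.2 b.2, ⟨⟨v, hv⟩⟩⟩

end Aux

section Aux2
open Finset
variable {W : Type} [Fintype W] [DecidableEq W]

/-- pure of dimension `k-1`: all facets have card `k` -/
def PureK (Δ : SC W) (k : ℕ) : Prop := ∀ F, Δ.facet F → F.card = k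

lemma face_card_le {Δ : SC W} {k : ℕ} (hp : PureK Δ k) {F : Finset W}
    (hF : F ∈ Δ.faces) : F.card ≤ k := by
  obtain ⟨G, hG, hFG⟩ := exists_facet Δ hF
  exact (hp G hG) ▸ Finset.card_le_card hFG

lemma link_mem {Δ : SC W} {x : W} {F : Finset W} (h : F ∈ (Δ.link x).faces) :
    x ∉ F ∧ insert x F ∈ Δ.faces := h

lemma link_card_le {Δ : SC W} {x : W} (hp : PureK Δ 3) {F : Finset W}
    (hF : F ∈ (Δ.link x).faces) : F.card ≤ 2 := by
  have h := face_card_le hp hF.2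
  rw [Finset.card_insert_of_notMem hF.1] at h
  omega

lemma pure_link {Δ : SC W} {x : W} (hp : PureK Δ 3) : PureK (Δ.link x) 2 := by
  intro F hF
  obtain ⟨G, hG, hFG⟩ := exists_facet Δ hF.1.2
  have hxG : x ∈ G := hFG (Finset.mem_insert_self x F)
  have hGe : G.erase x ∈ (Δ.link x).faces := by
    refine ⟨Finset.notMem_erase x G, ?_⟩
    rw [Finset.insert_erase hxG]; exact hG.1
  have hsub : F ⊆ G.erase x := by
    intro a ha
    exact Finset.mem_erase.2 ⟨fun e => hF.1.1 (e ▸ ha), hFG (Finset.mem_insert_of_mem ha)⟩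
  have := hF.2 (G.erase x) hGe hsub
  rw [this, Finset.card_erase_of_mem hxG, hp G hG]

lemma link_edge {Δ : SC W} {x : W} (hp : PureK Δ 3) (hx : ({x} : Finset W) ∈ Δ.faces) :
    ∃ F ∈ (Δ.link x).faces, F.card = 2 := by
  obtain ⟨G, hG, hFG⟩ := exists_facet Δ hx
  have hxG : x ∈ G := hFG (Finset.mem_singleton_self x)
  refine ⟨G.erase x, ⟨Finset.notMem_erase x G, by rw [Finset.insert_erase hxG]; exact hG.1⟩, ?_⟩
  rw [Finset.card_erase_of_mem hxG, hp G hG]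

lemma transGen_head {α : Type*} {r : α → α → Prop} {a b : α}
    (h : Relation.TransGen r a b) : ∃ u, r a u := by
  induction h with
  | single h' => exact ⟨_, h'⟩
  | tail _ _ ih => exact ih

/-- in a connected complex with two distinct vertices, each vertex is in an edge -/
lemma vertex_in_edge {Δ : SC W} (hc : Δ.Conn) {v w : W}
    (hv : ({v} : Finset W) ∈ Δ.faces) (hw : ({w} : Finset W) ∈ Δ.faces) (hvw : v ≠ w) :
    ∃ u, u ≠ v ∧ ({v, u} : Finset W) ∈ Δ.faces := by
  have hr : Reach Δ v w := (conn_iff.1 hc).2 v w hv hw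
  rcases (Relation.reflTransGen_iff_eq_or_transGen.1 hr) with h | h
  · exact absurd h.symm hvw
  · obtain ⟨u, hu⟩ := transGen_head h
    exact ⟨u, hu.1.symm, hu.2⟩

end Aux2

section Aux3
open Finset
variable {W : Type} [Fintype W] [DecidableEq W]

lemma vfin_del {Δ : SC W} {x : W} : vfin (Δ.del x) = (vfin Δ).erase x := by
  ext v
  simp only [mem_vfin, Finset.mem_erase, mem_vfin]
  constructor
  · rintro ⟨hv, hf⟩
    exact ⟨fun e => hv (e ▸ Finset.mem_singleton_self v), hf⟩
  · rintro ⟨hne, hf⟩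
    exact ⟨fun hm => hne (Finset.mem_singleton.1 hm).symm, hf⟩

lemma reach_del_le {Δ : SC W} {x : W} {u v : W} (h : Reach (Δ.del x) u v) :
    Reach Δ u v :=
  Relation.ReflTransGen.mono (r := ER (Δ.del x)) (p := ER Δ)
    (fun _ _ (e : ER (Δ.del x) _ _) => (⟨e.1, e.2.2⟩ : ER Δ _ _)) u v h

/-- discrete complexes are vertex decomposable -/
lemma lemD : ∀ (m : ℕ) (Δ : SC W), (vfin Δ).card ≤ m →
    (∀ F ∈ Δ.faces, F.card ≤ 1) → (∅ : Finset W) ∈ Δ.faces → VD Δ := by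
  intro m
  induction m with
  | zero =>
    intro Δ hm h1 h0
    refine VD.point Δ ?_
    have hv : vfin Δ = ∅ := Finset.card_eq_zero.1 (Nat.le_zero.1 hm)
    ext F
    simp only [Set.mem_singleton_iff]
    constructor
    · intro hF
      by_contra hne
      obtain ⟨v, hv'⟩ := Finset.nonempty_iff_ne_empty.2 hne
      have : v ∈ vfin Δ := mem_vfin.2 (Δ.down_closed hF (Finset.singleton_subset_iff.2 hv'))
      simp [hv] at this
    · rintro rfl; exact h0
  | succ m ih =>
    intro Δ hm h1 h0
    rcases (vfin Δ).eq_empty_or_nonempty with hv | ⟨x, hx⟩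
    · exact (by exact ih Δ (by simp [hv]) h1 h0 : VD Δ)
    · have hxf : ({x} : Finset W) ∈ Δ.faces := mem_vfin.1 hx
      by_cases hone : ∀ v ∈ vfin Δ, v = x
      · refine VD.simplex Δ {x} ?_
        ext F
        simp only [Set.mem_setOf_eq]
        constructor
        · intro hF v hvF
          have : v ∈ vfin Δ :=
            mem_vfin.2 (Δ.down_closed hF (Finset.singleton_subset_iff.2 hvF))
          simp [hone v this]
        · intro hF; exact Δ.down_closed hxf hF
      · push_neg at hone
        obtain ⟨y, hy, hyx⟩ := hone
        refine VD.shed Δ x hxf ?_ ?_ ?_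
        · refine VD.point _ ?_
          ext F
          simp only [Set.mem_singleton_iff]
          constructor
          · rintro ⟨hxF, hiF⟩
            have hc := h1 _ hiF
            rw [Finset.card_insert_of_notMem hxF] at hc
            exact Finset.card_eq_zero.1 (by omega)
          · rintro rfl
            exact ⟨Finset.notMem_empty x, by simpa using hxf⟩
        · refine ih (Δ.del x) ?_ (fun F hF => h1 F hF.2) ⟨Finset.notMem_empty x, h0⟩
          rw [vfin_del]
          have := Finset.card_erase_of_mem hx
          omega
        · rintro F ⟨hF, hmax⟩
          have hyd : ({y} : Finset W) ∈ (Δ.del x).faces := by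
            refine ⟨?_, mem_vfin.1 hy⟩
            simp [Ne.symm hyx]
          have hFne : F ≠ ∅ := by
            rintro rfl
            have := hmax {y} hyd (Finset.empty_subset _)
            exact Finset.singleton_ne_empty y this.symm
          refine ⟨hF.2, fun G hG hFG => ?_⟩
          have h1F : 1 ≤ F.card := Finset.card_pos.2 (Finset.nonempty_iff_ne_empty.2 hFne)
          exact Finset.eq_of_subset_of_card_le hFG (by have := h1 G hG; omega)

/-- walks avoiding x give reachability in deletion -/
lemma walk_reach_del {Δ : SC W} {x : W} :
    ∀ {a b : {v : W // ({v} : Finset W) ∈ Δ.faces}} (p : Δ.skeleton.Walk a b),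
      (∀ c ∈ p.support, c.1 ≠ x) → Reach (Δ.del x) a.1 b.1 := by
  intro a b p
  induction p with
  | nil => intro h; exact Relation.ReflTransGen.refl
  | @cons u v w hadj p ih =>
    intro h
    have hu : u.1 ≠ x := h u (by rw [SimpleGraph.Walk.support_cons]; exact List.mem_cons_self)
    have hv : v.1 ≠ x := h v (by
      rw [SimpleGraph.Walk.support_cons]
      exact List.mem_cons_of_mem _ p.start_mem_support)
    obtain ⟨hne, hf⟩ := skel_adj.1 hadj
    refine Relation.ReflTransGen.head ⟨hne, ?_, hf⟩ (ih ?_)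
    · intro hxm
      rcases Finset.mem_insert.1 hxm with e | e
      · exact hu e.symm
      · exact hv (Finset.mem_singleton.1 e).symm
    · intro c hc
      exact h c (by rw [SimpleGraph.Walk.support_cons]; exact List.mem_cons_of_mem _ hc)

/-- existence of a shedding (non-cut) vertex -/
lemma exists_shed (Δ : SC W) (hc : Δ.Conn) {a b : W}
    (ha : ({a} : Finset W) ∈ Δ.faces) (hb : ({b} : Finset W) ∈ Δ.faces) (hab : a ≠ b) :
    ∃ x, ({x} : Finset W) ∈ Δ.faces ∧ x ≠ a ∧ (Δ.del x).Conn := by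
  classical
  set α := {v : W // ({v} : Finset W) ∈ Δ.faces} with hα
  haveI : Fintype α := Fintype.ofFinite α
  set G := Δ.skeleton with hG
  have hGc : G.Connected := hc
  set u₀ : α := ⟨a, ha⟩ with hu₀
  obtain ⟨x, _, hmax⟩ :=
    Finset.exists_max_image (Finset.univ : Finset α) (fun v => G.dist u₀ v) ⟨u₀, by simp⟩
  have hposb : 0 < G.dist u₀ ⟨b, hb⟩ :=
    hGc.pos_dist_of_ne (fun e => hab (congrArg Subtype.val e))
  have hxpos : 0 < G.dist u₀ x := lt_of_lt_of_le hposb (hmax ⟨b, hb⟩ (by simp))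
  have hxa : x ≠ u₀ := by
    intro e
    rw [e] at hxpos
    simp [SimpleGraph.dist_self] at hxpos
  -- every vertex other than x reaches u₀ in the deletion
  have key : ∀ v : α, v ≠ x → Reach (Δ.del x.1) v.1 u₀.1 := by
    intro v hvx
    obtain ⟨p, hp⟩ := hGc.exists_walk_length_eq_dist v u₀
    have hxp : x ∉ p.support := by
      intro hxs
      have hspec := SimpleGraph.Walk.take_spec p hxs
      have hlen : (p.takeUntil x hxs).length + (p.dropUntil x hxs).length = p.length := by
        conv_rhs => rw [← hspec]
        rw [SimpleGraph.Walk.length_append]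
      have h1 : 1 ≤ (p.takeUntil x hxs).length := by
        rcases Nat.eq_zero_or_pos (p.takeUntil x hxs).length with h0 | h0
        · exact absurd (SimpleGraph.Walk.eq_of_length_eq_zero h0) hvx
        · exact h0
      have h2 : G.dist x u₀ ≤ (p.dropUntil x hxs).length :=
        SimpleGraph.dist_le _
      have h3 : G.dist u₀ v ≤ G.dist u₀ x := hmax v (by simp)
      have h4 : G.dist v u₀ = G.dist u₀ v := SimpleGraph.dist_comm
      have h5 : G.dist x u₀ = G.dist u₀ x := SimpleGraph.dist_comm
      omega
    refine walk_reach_del p ?_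
    intro c hcs e
    exact hxp (by rwa [Subtype.ext e] at hcs)
  have hxa' : x.1 ≠ a := fun e => hxa (Subtype.ext e)
  refine ⟨x.1, x.2, hxa', ?_⟩
  rw [conn_iff]
  have hu0d : ({a} : Finset W) ∈ (Δ.del x.1).faces :=
    ⟨by simpa using hxa', ha⟩
  refine ⟨⟨a, hu0d⟩, ?_⟩
  intro u v hu hv
  have hux : u ≠ x.1 := fun e => hu.1 (by simp [e])
  have hvx : v ≠ x.1 := fun e => hv.1 (by simp [e])
  have h1 := key ⟨u, hu.2⟩ (fun e => hux (congrArg Subtype.val e))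
  have h2 := key ⟨v, hv.2⟩ (fun e => hvx (congrArg Subtype.val e))
  exact h1.trans h2.symm'

end Aux3

section Aux4
open Finset
variable {W : Type} [Fintype W] [DecidableEq W]

/-- connected 1-dimensional complexes (with an edge) are vertex decomposable -/
lemma lemA : ∀ (m : ℕ) (Δ : SC W), (vfin Δ).card ≤ m →
    (∀ F ∈ Δ.faces, F.card ≤ 2) → (∃ F ∈ Δ.faces, F.card = 2) → Δ.Conn → VD Δ := by
  intro m
  induction m with
  | zero =>
    intro Δ hm h2 hE _
    obtain ⟨E, hEf, hEc⟩ := hE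
    obtain ⟨a, b, hab, rfl⟩ := Finset.card_eq_two.1 hEc
    have : a ∈ vfin Δ := mem_vfin.2 (Δ.down_closed hEf (by simp))
    have := Finset.card_pos.2 ⟨a, this⟩
    omega
  | succ m ih =>
    intro Δ hm h2 hE hc
    obtain ⟨E, hEf, hEc⟩ := hE
    obtain ⟨a, b, hab, rfl⟩ := Finset.card_eq_two.1 hEc
    have haf : ({a} : Finset W) ∈ Δ.faces := Δ.down_closed hEf (by simp)
    have hbf : ({b} : Finset W) ∈ Δ.faces := Δ.down_closed hEf (by simp)
    have hav : a ∈ vfin Δ := mem_vfin.2 haf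
    have hbv : b ∈ vfin Δ := mem_vfin.2 hbf
    by_cases hsmall : (vfin Δ).card ≤ 2
    · -- exactly two vertices: it is the simplex on {a, b}
      have hveq : vfin Δ = {a, b} := by
        refine (Finset.eq_of_subset_of_card_le ?_ ?_).symm
        · intro v hv
          rcases Finset.mem_insert.1 hv with rfl | hv
          · exact hav
          · exact (Finset.mem_singleton.1 hv) ▸ hbv
        · rwa [Finset.card_insert_of_notMem (by simpa using hab), Finset.card_singleton]
      refine VD.simplex Δ {a, b} ?_
      ext F
      simp only [Set.mem_setOf_eq]
      constructor
      · intro hF v hvF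
        have : v ∈ vfin Δ :=
          mem_vfin.2 (Δ.down_closed hF (Finset.singleton_subset_iff.2 hvF))
        rwa [hveq] at this
      · intro hF; exact Δ.down_closed hEf hF
    · -- at least three vertices: shed a non-cut vertex
      push_neg at hsmall
      obtain ⟨x, hxf, hxa, hdc⟩ := exists_shed Δ hc haf hbf hab
      have hvd : vfin (Δ.del x) = (vfin Δ).erase x := vfin_del
      have hxv : x ∈ vfin Δ := mem_vfin.2 hxf
      have hdcard : (vfin (Δ.del x)).card = (vfin Δ).card - 1 := by
        rw [hvd, Finset.card_erase_of_mem hxv]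
      -- the deletion has at least two vertices
      obtain ⟨c, hcv, d, hdv, hcd⟩ : ∃ c ∈ vfin (Δ.del x), ∃ d ∈ vfin (Δ.del x), c ≠ d := by
        have : 1 < (vfin (Δ.del x)).card := by omega
        exact Finset.one_lt_card.1 this
      have hcf := mem_vfin.1 hcv
      have hdf := mem_vfin.1 hdv
      -- every vertex of the deletion lies in an edge of the deletion
      have hedge : ∀ v, ({v} : Finset W) ∈ (Δ.del x).faces →
          ∃ u, u ≠ v ∧ ({v, u} : Finset W) ∈ (Δ.del x).faces := by
        intro v hv
        by_cases hvc : v = c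
        · subst hvc
          exact vertex_in_edge hdc hv hdf hcd
        · exact vertex_in_edge hdc hv hcf hvc
      refine VD.shed Δ x hxf ?_ ?_ ?_
      · -- link is discrete
        refine lemD (vfin (Δ.link x)).card (Δ.link x) le_rfl ?_ ?_
        · intro F hF
          have := h2 _ hF.2
          rw [Finset.card_insert_of_notMem hF.1] at this
          omega
        · exact ⟨Finset.notMem_empty x, by simpa using hxf⟩
      · -- deletion is vertex decomposable by induction
        refine ih (Δ.del x) (by omega) (fun F hF => h2 F hF.2) ?_ hdc
        obtain ⟨u, huc, huf⟩ := hedge c hcf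
        refine ⟨{c, u}, huf, ?_⟩
        rw [Finset.card_insert_of_notMem (by simpa using (Ne.symm huc))]
        simp
      · -- facets of the deletion are facets
        rintro F ⟨hF, hmax⟩
        have hcard : F.card = 2 := by
          by_contra hne2
          have hle : F.card ≤ 1 := by have := h2 F hF.2; omega
          rcases F.eq_empty_or_nonempty with rfl | hne'
          · have := hmax {c} hcf (Finset.empty_subset _)
            exact Finset.singleton_ne_empty c this.symm
          · obtain ⟨v, rfl⟩ := Finset.card_eq_one.1 (le_antisymm hle (Finset.card_pos.2 hne'))
            obtain ⟨u, huv, huf⟩ := hedge v hF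
            have heq := hmax {v, u} huf (by simp)
            have hu : u ∈ ({v} : Finset W) := by rw [heq]; simp
            exact huv (by simpa using hu)
        refine ⟨hF.2, fun G hG hFG => ?_⟩
        exact Finset.eq_of_subset_of_card_le hFG (by have := h2 G hG; omega)
end Aux4

section Aux5
open Finset
variable {W : Type} [Fintype W] [DecidableEq W]

/-- vertex decomposable pure 1-dimensional complexes are connected -/
lemma lemC {Δ : SC W} (hvd : VD Δ) :
    PureK Δ 2 → (∃ v, ({v} : Finset W) ∈ Δ.faces) → Δ.Conn := by
  induction hvd with
  | point Γ hfaces =>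
    rintro _ ⟨v, hv⟩
    rw [hfaces] at hv
    exact absurd hv (Finset.singleton_ne_empty v)
  | simplex Γ F hfaces =>
    intro hp _
    have hFf : F ∈ Γ.faces := by rw [hfaces]; exact Set.mem_setOf_eq ▸ Finset.Subset.refl F
    have hfacet : Γ.facet F := by
      refine ⟨hFf, fun G hG hFG => ?_⟩
      rw [hfaces] at hG
      exact Finset.Subset.antisymm hFG hG
    obtain ⟨a, b, hab, rfl⟩ := Finset.card_eq_two.1 (hp F hfacet)
    rw [conn_iff]
    have hmem : ∀ v ∈ ({a, b} : Finset W), ({v} : Finset W) ∈ Γ.faces := by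
      intro v hv
      rw [hfaces]
      exact Finset.singleton_subset_iff.2 hv
    refine ⟨⟨a, hmem a (by simp)⟩, ?_⟩
    intro u v hu hv
    have huF : u ∈ ({a, b} : Finset W) := by
      have := hu; rw [hfaces] at this; exact Finset.singleton_subset_iff.1 this
    have hvF : v ∈ ({a, b} : Finset W) := by
      have := hv; rw [hfaces] at this; exact Finset.singleton_subset_iff.1 this
    by_cases huv : u = v
    · subst huv; exact Relation.ReflTransGen.refl
    · refine Relation.ReflTransGen.single ⟨huv, ?_⟩
      rw [hfaces]
      intro w hw
      rcases Finset.mem_insert.1 hw with rfl | hw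
      · exact huF
      · exact (Finset.mem_singleton.1 hw) ▸ hvF
  | shed Γ x hx hlink hdel hfacets ihlink ihdel =>
    intro hp _
    obtain ⟨G, hG, hxG⟩ := exists_facet Γ hx
    have hxG' : x ∈ G := hxG (Finset.mem_singleton_self x)
    have hGc := hp G hG
    obtain ⟨y, hy⟩ := Finset.card_eq_one.1 (by rw [Finset.card_erase_of_mem hxG', hGc])
    have hyx : y ≠ x := by
      have := Finset.notMem_erase x G
      rw [hy] at this
      exact fun e => this (e ▸ Finset.mem_singleton_self y)
    have hxyG : ({x, y} : Finset W) = G := by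
      have : insert x (G.erase x) = G := Finset.insert_erase hxG'
      rw [hy] at this
      exact this
    have hxyf : ({x, y} : Finset W) ∈ Γ.faces := hxyG ▸ hG.1
    have hyf : ({y} : Finset W) ∈ Γ.faces := Γ.down_closed hxyf (by simp)
    have hyd : ({y} : Finset W) ∈ (Γ.del x).faces := by
      refine ⟨by simpa using hyx.symm, hyf⟩
    have hpd : PureK (Γ.del x) 2 := fun F hF => hp F (hfacets F hF)
    have hdconn : (Γ.del x).Conn := ihdel hpd ⟨y, hyd⟩
    rw [conn_iff]
    refine ⟨⟨x, hx⟩, ?_⟩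
    have hkey : ∀ u, ({u} : Finset W) ∈ Γ.faces → Reach Γ u y := by
      intro u hu
      by_cases hux : u = x
      · subst hux
        exact Relation.ReflTransGen.single ⟨hyx.symm, hxyf⟩
      · have hud : ({u} : Finset W) ∈ (Γ.del x).faces := ⟨by simpa using (Ne.symm hux), hu⟩
        exact reach_del_le ((conn_iff.1 hdconn).2 u y hud hyd)
    intro u v hu hv
    exact (hkey u hu).trans (hkey v hv).symm'
end Aux5

section Aux6
open Finset
variable {W : Type} [Fintype W] [DecidableEq W]

def Cond (Δ : SC W) (x : W) : Prop :=
  (∀ F ∈ (Δ.link x).faces, F.card ≤ 2) ∧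
  (∃ F ∈ (Δ.link x).faces, F.card = 2) ∧ (Δ.link x).Conn

def Conds (Δ : SC W) (L : List W) : Prop :=
  ∀ i : Fin L.length, Cond (delSeq Δ (L.take i)) (L.get i)

lemma conds_cons {Δ : SC W} {x : W} {xs : List W} :
    Conds Δ (x :: xs) ↔ Cond Δ x ∧ Conds (Δ.del x) xs := by
  constructor
  · intro h
    exact ⟨h ⟨0, Nat.succ_pos _⟩, fun j => h ⟨j.1 + 1, Nat.succ_lt_succ j.2⟩⟩
  · rintro ⟨h0, h⟩ ⟨i, hi⟩
    cases i with
    | zero => exact h0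
    | succ j => exact h ⟨j, Nat.lt_of_succ_lt_succ hi⟩

lemma delSeq_mem : ∀ (L : List W) (Δ : SC W) (F : Finset W),
    F ∈ (delSeq Δ L).faces → F ∈ Δ.faces ∧ ∀ v ∈ L, v ∉ F := by
  intro L
  induction L with
  | nil => exact fun Δ F hF => ⟨hF, fun v hv => absurd hv List.not_mem_nil⟩
  | cons x xs ih =>
    intro Δ F hF
    obtain ⟨h1, h2⟩ := ih (Δ.del x) F hF
    refine ⟨h1.2, fun v hv => ?_⟩
    rcases List.mem_cons.1 hv with rfl | hv
    · exact h1.1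
    · exact h2 v hv

/-- any face of the link extends to an edge of the link -/
lemma link_sup {Δ : SC W} {x : W} (hc : Cond Δ x) :
    ∀ S ∈ (Δ.link x).faces, ∃ E ∈ (Δ.link x).faces, E.card = 2 ∧ S ⊆ E := by
  obtain ⟨hle, ⟨E0, hE0, hE0c⟩, hconn⟩ := hc
  intro S hS
  rcases Nat.lt_or_ge S.card 2 with hlt | hge
  · rcases S.eq_empty_or_nonempty with rfl | hne
    · exact ⟨E0, hE0, hE0c, Finset.empty_subset _⟩
    · obtain ⟨v, rfl⟩ := Finset.card_eq_one.1
        (le_antisymm (by omega) (Finset.card_pos.2 hne))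
      obtain ⟨a, b, hab, rfl⟩ := Finset.card_eq_two.1 hE0c
      have hva : ({v} : Finset W) ∈ (Δ.link x).faces := hS
      have haf : ({a} : Finset W) ∈ (Δ.link x).faces :=
        (Δ.link x).down_closed hE0 (by simp)
      have hbf : ({b} : Finset W) ∈ (Δ.link x).faces :=
        (Δ.link x).down_closed hE0 (by simp)
      obtain ⟨u, huv, huf⟩ : ∃ u, u ≠ v ∧ ({v, u} : Finset W) ∈ (Δ.link x).faces := by
        by_cases hvv : v = a
        · subst hvv
          exact vertex_in_edge hconn hva hbf hab
        · exact vertex_in_edge hconn hva haf hvv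
      refine ⟨{v, u}, huf, ?_, by simp⟩
      rw [Finset.card_insert_of_notMem (by simpa using (Ne.symm huv))]
      simp
  · exact ⟨S, hS, le_antisymm (hle S hS) hge, subset_rfl⟩

lemma pure_down {Δ : SC W} {x : W} (hc : Cond Δ x) (hp : PureK (Δ.del x) 3) :
    PureK Δ 3 := by
  intro F hF
  by_cases hxF : x ∈ F
  · have hSl : F.erase x ∈ (Δ.link x).faces := by
      refine ⟨Finset.notMem_erase x F, ?_⟩
      rw [Finset.insert_erase hxF]
      exact hF.1
    obtain ⟨E, hE, hEc, hSE⟩ := link_sup hc (F.erase x) hSl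
    have hiE : insert x E ∈ Δ.faces := hE.2
    have hFE : F ⊆ insert x E := by
      intro v hv
      by_cases hvx : v = x
      · subst hvx; exact Finset.mem_insert_self _ _
      · exact Finset.mem_insert_of_mem (hSE (Finset.mem_erase.2 ⟨hvx, hv⟩))
    have := hF.2 (insert x E) hiE hFE
    rw [this, Finset.card_insert_of_notMem hE.1, hEc]
  · have hFd : F ∈ (Δ.del x).faces := ⟨hxF, hF.1⟩
    refine hp F ⟨hFd, fun G hG hFG => hF.2 G hG.2 hFG⟩

lemma pure_of_conds : ∀ (L : List W) (Δ : SC W), Conds Δ L →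
    (∃ R : Finset W, R.card = 3 ∧ (delSeq Δ L).faces = {s : Finset W | s ⊆ R}) →
    PureK Δ 3 := by
  intro L
  induction L with
  | nil =>
    rintro Δ _ ⟨R, hRc, hR⟩ F hF
    have hRf : R ∈ Δ.faces := by rw [show Δ.faces = _ from hR]; exact Set.mem_setOf_eq ▸ Finset.Subset.refl R
    have hFR : F ⊆ R := by
      have := hF.1
      rw [show Δ.faces = _ from hR] at this
      exact this
    rw [hF.2 R hRf hFR, hRc]
  | cons x xs ih =>
    rintro Δ hcond hR
    obtain ⟨h0, hxs⟩ := conds_cons.1 hcond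
    exact pure_down h0 (ih (Δ.del x) hxs hR)

end Aux6

section Aux7
open Finset
variable {W : Type} [Fintype W] [DecidableEq W]

lemma lem_bwd : ∀ (L : List W) (Δ : SC W), Conds Δ L →
    (∃ R : Finset W, R.card = 3 ∧ (delSeq Δ L).faces = {s : Finset W | s ⊆ R}) →
    VDvia Δ L := by
  intro L
  induction L with
  | nil =>
    rintro Δ _ ⟨R, _, hR⟩
    exact VDvia.simplex Δ R hR
  | cons x xs ih =>
    rintro Δ hcond hR
    obtain ⟨h0, hxs⟩ := conds_cons.1 hcond
    have hp3d : PureK (Δ.del x) 3 := pure_of_conds xs (Δ.del x) hxs hR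
    have hp3 : PureK Δ 3 := pure_down h0 hp3d
    obtain ⟨hle, ⟨E, hE, hEc⟩, hconn⟩ := h0
    have hx : ({x} : Finset W) ∈ Δ.faces :=
      Δ.down_closed hE.2 (Finset.singleton_subset_iff.2 (Finset.mem_insert_self x E))
    refine VDvia.shed Δ x xs hx ?_ (ih (Δ.del x) hxs hR) ?_
    · exact lemA (vfin (Δ.link x)).card (Δ.link x) le_rfl hle ⟨E, hE, hEc⟩ hconn
    · intro F hF
      have hc3 : F.card = 3 := hp3d F hF
      obtain ⟨G, hG, hFG⟩ := exists_facet Δ hF.1.2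
      have : F = G := Finset.eq_of_subset_of_card_le hFG (by rw [hp3 G hG, hc3])
      exact this ▸ hG

lemma p3_delSeq {Δ : SC W} {L : List W} (hv : VDvia Δ L) (hp : PureK Δ 3) :
    PureK (delSeq Δ L) 3 := by
  induction hv with
  | point Γ h => exact hp
  | simplex Γ F h => exact hp
  | shed Γ x xs hx hlink hvia hfacets ih =>
    exact ih (fun F hF => hp F (hfacets F hF))

lemma lem_fwd {Δ : SC W} {L : List W} (hv : VDvia Δ L) (hp : PureK Δ 3) :
    Conds Δ L ∧ ∃ R : Finset W, (delSeq Δ L).faces = {s : Finset W | s ⊆ R} := by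
  induction hv with
  | point Γ h =>
    refine ⟨fun i => absurd i.2 (by simp), ∅, ?_⟩
    rw [show (delSeq Γ []).faces = _ from h]
    ext s
    simp [Finset.subset_empty]
  | simplex Γ F h => exact ⟨fun i => absurd i.2 (by simp), F, h⟩
  | shed Γ x xs hx hlink hvia hfacets ih =>
    have hp3d : PureK (Γ.del x) 3 := fun F hF => hp F (hfacets F hF)
    obtain ⟨hconds, R, hR⟩ := ih hp3d
    refine ⟨conds_cons.2 ⟨?_, hconds⟩, R, hR⟩
    obtain ⟨E, hE, hEc⟩ := link_edge hp hx
    refine ⟨fun F hF => link_card_le hp hF, ⟨E, hE, hEc⟩, ?_⟩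
    obtain ⟨v, hv⟩ := Finset.card_pos.1 (by rw [hEc]; omega)
    exact lemC hlink (pure_link hp)
      ⟨v, (Γ.link x).down_closed hE (Finset.singleton_subset_iff.2 hv)⟩

end Aux7

theorem two_dim_vd_criterion {W : Type} [Fintype W] [DecidableEq W]
    (n : ℕ) (hcard : Fintype.card W = n) (Δ : SC W)
    (hpure : ∀ F : Finset W, Δ.facet F → F.card = 3)
    (hdim : ∃ F ∈ Δ.faces, F.card = 3)
    (hconn : Δ.Conn)
    (L : List W) (hlen : L.length = n - 3) (hnodup : L.Nodup) :
    VDvia Δ L ↔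
      ((∀ i : Fin L.length,
          (∀ F ∈ ((delSeq Δ (L.take i)).link (L.get i)).faces, F.card ≤ 2) ∧
          (∃ F ∈ ((delSeq Δ (L.take i)).link (L.get i)).faces, F.card = 2) ∧
          ((delSeq Δ (L.take i)).link (L.get i)).Conn) ∧
        (delSeq Δ L).faces = {s : Finset W | s ⊆ Finset.univ \ L.toFinset}) := by
  classical
  have hn3 : 3 ≤ n := by
    obtain ⟨F, hF, hFc⟩ := hdim
    have := Finset.card_le_card (Finset.subset_univ F)
    rw [hFc, Finset.card_univ, hcard] at this
    exact this
  have hDcard : (Finset.univ \ L.toFinset).card = 3 := by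
    rw [Finset.card_sdiff_of_subset (Finset.subset_univ _), Finset.card_univ, hcard,
      List.toFinset_card_of_nodup hnodup, hlen]
    omega
  constructor
  · intro hv
    obtain ⟨hconds, R, hR⟩ := lem_fwd hv hpure
    have hp3 : PureK (delSeq Δ L) 3 := p3_delSeq hv hpure
    have hRf : R ∈ (delSeq Δ L).faces := by
      rw [hR]; exact Set.mem_setOf_eq ▸ Finset.Subset.refl R
    have hRfacet : (delSeq Δ L).facet R := by
      refine ⟨hRf, fun G hG hRG => ?_⟩
      rw [hR] at hG
      exact Finset.Subset.antisymm hRG hG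
    have hRc : R.card = 3 := hp3 R hRfacet
    have hRsub : R ⊆ Finset.univ \ L.toFinset := by
      intro v hvR
      obtain ⟨_, h2⟩ := delSeq_mem L Δ R hRf
      exact Finset.mem_sdiff.2
        ⟨Finset.mem_univ v, fun hm => h2 v (List.mem_toFinset.1 hm) hvR⟩
    have hReq : R = Finset.univ \ L.toFinset :=
      Finset.eq_of_subset_of_card_le hRsub (by rw [hRc, hDcard])
    exact ⟨fun i => ⟨(hconds i).1, (hconds i).2.1, (hconds i).2.2⟩, by rw [hR, hReq]⟩
  · rintro ⟨hconds, hfin⟩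
    exact lem_bwd L Δ (fun i => ⟨(hconds i).1, (hconds i).2.1, (hconds i).2.2⟩)
      ⟨Finset.univ \ L.toFinset, hDcard, hfin⟩
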